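/- If a semi-normalized Schauder basis of a Banach space is K_u-suppression-unconditional and has the w-Property (A) with constant C_a, then it is w-greedy with constant C_g ≤ K_u·C_a. -/

import Mathlib

open Filter

/-- Convexity: coefficients bounded by t are dominated by sign-vectors. -/
lemma aux_up {X : Type*} [NormedAddCommGroup X] [NormedSpace ℝ X]
    (e : ℕ → X) (t M : ℝ) (ht : 0 < t) (a : ℕ → ℝ) :
    ∀ (S : Finset ℕ), (∀ n ∈ S, |a n| ≤ t) → ∀ (v : X),
      (∀ ε : ℕ → ℝ, (∀ n, ε n = 1 ∨ ε n = -1) →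
        ‖v + ∑ n ∈ S, (t * ε n) • e n‖ ≤ M) →
      ‖v + ∑ n ∈ S, a n • e n‖ ≤ M := by
  intro S
  induction S using Finset.induction_on with
  | empty =>
      intro _ v h
      simpa using h (fun _ => 1) (fun _ => Or.inl rfl)
  | insert s S hs ih =>
      intro ha v h
      set θ : ℝ := (a s + t) / (2 * t) with hθdef
      have has : |a s| ≤ t := ha s (Finset.mem_insert_self s S)
      have habs := abs_le.mp has
      have hθ0 : 0 ≤ θ := by
        apply div_nonneg <;> nlinarith
      have hθ1 : θ ≤ 1 := by
        rw [div_le_one (by linarith)]; linarith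
      have hsc : θ * t + (1 - θ) * (-t) = a s := by
        rw [hθdef]; field_simp; ring
      have key : v + ∑ n ∈ insert s S, a n • e n
          = θ • (v + (t * 1) • e s + ∑ n ∈ S, a n • e n)
            + (1 - θ) • (v + (t * (-1)) • e s + ∑ n ∈ S, a n • e n) := by
        rw [Finset.sum_insert hs, ← hsc]
        module
      have bnd : ∀ σ : ℝ, σ = 1 ∨ σ = -1 →
          ‖v + (t * σ) • e s + ∑ n ∈ S, a n • e n‖ ≤ M := by
        intro σ hσ
        apply ih (fun n hn => ha n (Finset.mem_insert_of_mem hn))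
        intro ε hε
        have hε' : ∀ n, (Function.update ε s σ) n = 1 ∨ (Function.update ε s σ) n = -1 := by
          intro n
          by_cases hn : n = s
          · subst hn; simpa [Function.update_self] using hσ
          · simpa [Function.update_of_ne hn] using hε n
        have := h (Function.update ε s σ) hε'
        rw [Finset.sum_insert hs, Function.update_self] at this
        have hcong : ∑ n ∈ S, (t * Function.update ε s σ n) • e n
            = ∑ n ∈ S, (t * ε n) • e n := by
          apply Finset.sum_congr rfl
          intro n hn
          rw [Function.update_of_ne (by rintro rfl; exact hs hn)]
        rw [hcong] at this
        calc ‖v + (t * σ) • e s + ∑ n ∈ S, (t * ε n) • e n‖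
            = ‖v + ((t * σ) • e s + ∑ n ∈ S, (t * ε n) • e n)‖ := by rw [add_assoc]
          _ ≤ M := this
      calc ‖v + ∑ n ∈ insert s S, a n • e n‖
          = ‖θ • (v + (t * 1) • e s + ∑ n ∈ S, a n • e n)
              + (1 - θ) • (v + (t * (-1)) • e s + ∑ n ∈ S, a n • e n)‖ := by rw [key]
        _ ≤ θ * ‖v + (t * 1) • e s + ∑ n ∈ S, a n • e n‖
            + (1 - θ) * ‖v + (t * (-1)) • e s + ∑ n ∈ S, a n • e n‖ := by
            refine (norm_add_le _ _).trans ?_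
            rw [norm_smul, norm_smul, Real.norm_eq_abs, Real.norm_eq_abs,
              abs_of_nonneg hθ0, abs_of_nonneg (by linarith)]
        _ ≤ θ * M + (1 - θ) * M := by
            have h1 := bnd 1 (Or.inl rfl)
            have h2 := bnd (-1) (Or.inr rfl)
            have n1 : (0:ℝ) ≤ ‖v + (t * 1) • e s + ∑ n ∈ S, a n • e n‖ := norm_nonneg _
            nlinarith
        _ = M := by ring

/-- Reverse convexity: sign-vectors at level t are dominated by suppressions. -/
lemma aux_down {X : Type*} [NormedAddCommGroup X] [NormedSpace ℝ X]
    (e : ℕ → X) (t M : ℝ) (ht : 0 ≤ t) (b : ℕ → ℝ) :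
    ∀ (D : Finset ℕ), (∀ n ∈ D, t ≤ |b n|) → ∀ (v : X),
      (∀ S ⊆ D, ‖v + ∑ n ∈ S, b n • e n‖ ≤ M) →
      ‖v + ∑ n ∈ D, (t * (if b n < 0 then (-1:ℝ) else 1)) • e n‖ ≤ M := by
  intro D
  induction D using Finset.induction_on with
  | empty =>
      intro _ v h
      simpa using h ∅ (Finset.empty_subset _)
  | insert s D hs ih =>
      intro hb v h
      have hbs : t ≤ |b s| := hb s (Finset.mem_insert_self s D)
      have ihh : ∀ v' : X, (∀ S ⊆ D, ‖v' + ∑ n ∈ S, b n • e n‖ ≤ M) →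
          ‖v' + ∑ n ∈ D, (t * (if b n < 0 then (-1:ℝ) else 1)) • e n‖ ≤ M :=
        fun v' => ih (fun n hn => hb n (Finset.mem_insert_of_mem hn)) v'
      by_cases hb0 : b s = 0
      · have ht0 : t = 0 := le_antisymm (by simpa [hb0] using hbs) ht
        rw [Finset.sum_insert hs]
        have : (t * (if b s < 0 then (-1:ℝ) else 1)) • e s = 0 := by
          rw [ht0]; simp
        rw [this, zero_add]
        exact ihh v (fun S hS => h S (hS.trans (Finset.subset_insert s D)))
      · set lam : ℝ := t / |b s| with hlamdef
        have habs : 0 < |b s| := abs_pos.mpr hb0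
        have hl0 : 0 ≤ lam := div_nonneg ht habs.le
        have hl1 : lam ≤ 1 := by rw [div_le_one habs]; exact hbs
        have hsc : t * (if b s < 0 then (-1:ℝ) else 1) = lam * b s := by
          rw [hlamdef]
          rcases lt_or_gt_of_ne hb0 with hneg | hpos
          · rw [if_pos hneg, abs_of_neg hneg]
            rw [div_mul_eq_mul_div, eq_comm, div_eq_iff (by linarith : -b s ≠ 0)]; ring
          · rw [if_neg (not_lt.mpr hpos.le), abs_of_pos hpos]; field_simp
        have key : v + ∑ n ∈ insert s D, (t * (if b n < 0 then (-1:ℝ) else 1)) • e n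
            = lam • (v + b s • e s + ∑ n ∈ D, (t * (if b n < 0 then (-1:ℝ) else 1)) • e n)
              + (1 - lam) • (v + ∑ n ∈ D, (t * (if b n < 0 then (-1:ℝ) else 1)) • e n) := by
          rw [Finset.sum_insert hs, hsc]
          module
        have b1 : ‖v + b s • e s + ∑ n ∈ D, (t * (if b n < 0 then (-1:ℝ) else 1)) • e n‖ ≤ M := by
          apply ihh
          intro S hS
          have hsS : s ∉ S := fun hmem => hs (hS hmem)
          have := h (insert s S) (Finset.insert_subset_insert s hS)
          rw [Finset.sum_insert hsS] at this
          calc ‖v + b s • e s + ∑ n ∈ S, b n • e n‖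
              = ‖v + (b s • e s + ∑ n ∈ S, b n • e n)‖ := by rw [add_assoc]
            _ ≤ M := this
        have b2 : ‖v + ∑ n ∈ D, (t * (if b n < 0 then (-1:ℝ) else 1)) • e n‖ ≤ M :=
          ihh v (fun S hS => h S (hS.trans (Finset.subset_insert s D)))
        calc ‖v + ∑ n ∈ insert s D, (t * (if b n < 0 then (-1:ℝ) else 1)) • e n‖
            = ‖lam • (v + b s • e s + ∑ n ∈ D, (t * (if b n < 0 then (-1:ℝ) else 1)) • e n)
                + (1 - lam) • (v + ∑ n ∈ D, (t * (if b n < 0 then (-1:ℝ) else 1)) • e n)‖ := by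
              rw [key]
          _ ≤ lam * ‖v + b s • e s + ∑ n ∈ D, (t * (if b n < 0 then (-1:ℝ) else 1)) • e n‖
              + (1 - lam) * ‖v + ∑ n ∈ D, (t * (if b n < 0 then (-1:ℝ) else 1)) • e n‖ := by
              refine (norm_add_le _ _).trans ?_
              rw [norm_smul, norm_smul, Real.norm_eq_abs, Real.norm_eq_abs,
                abs_of_nonneg hl0, abs_of_nonneg (by linarith)]
          _ ≤ lam * M + (1 - lam) * M := by nlinarith [norm_nonneg (v + b s • e s + ∑ n ∈ D, (t * (if b n < 0 then (-1:ℝ) else 1)) • e n)]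
          _ = M := by ring

theorem stmt3 {X : Type*} [NormedAddCommGroup X] [NormedSpace ℝ X] [CompleteSpace X]
    (e : ℕ → X) (f : ℕ → X →L[ℝ] ℝ) (c₁ c₂ : ℝ) (hc₁ : 0 < c₁)
    (hsn : ∀ n, c₁ ≤ ‖e n‖ ∧ ‖e n‖ ≤ c₂ ∧ c₁ ≤ ‖f n‖ ∧ ‖f n‖ ≤ c₂)
    (hbi : ∀ i j, f i (e j) = if i = j then (1:ℝ) else 0)
    (hexp : ∀ x : X, Tendsto (fun m => ∑ i ∈ Finset.range m, f i x • e i) atTop (nhds x))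
    (w : ℕ → ℝ) (hw : ∀ n, 0 < w n)
    (Ku Ca : ℝ) (hKu : 1 ≤ Ku) (hCa : 1 ≤ Ca)
    (hunc : ∀ (x : X) (A : Finset ℕ), ‖x - ∑ n ∈ A, f n x • e n‖ ≤ Ku * ‖x‖)
    (hA : ∀ (x : X) (A B : Finset ℕ) (ε η : ℕ → ℝ) (t : ℝ),
      (∀ n, ε n = 1 ∨ ε n = -1) → (∀ n, η n = 1 ∨ η n = -1) →
      ∑ n ∈ A, w n ≤ ∑ n ∈ B, w n → Disjoint A B →
      (∀ n ∈ A ∪ B, f n x = 0) → (∀ j, |f j x| ≤ t) →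
      ‖x + ∑ n ∈ A, (t * ε n) • e n‖ ≤ Ca * ‖x + ∑ n ∈ B, (t * η n) • e n‖) :
    ∀ (x : X) (Λ : Finset ℕ),
      (∀ k ∈ Λ, ∀ j ∉ Λ, |f j x| ≤ |f k x|) →
      ∀ (A : Finset ℕ) (α : ℕ → ℝ), ∑ n ∈ A, w n ≤ ∑ n ∈ Λ, w n →
        ‖x - ∑ k ∈ Λ, f k x • e k‖ ≤ (Ku * Ca) * ‖x - ∑ n ∈ A, α n • e n‖ := by
  intro x Λ hgr A α hwA
  have hKC1 : (1:ℝ) ≤ Ku * Ca := by nlinarith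
  -- coefficient computation for finite sums
  have fP : ∀ (S : Finset ℕ) (c : ℕ → ℝ) (n : ℕ),
      f n (∑ m ∈ S, c m • e m) = if n ∈ S then c n else 0 := by
    intro S c n
    rw [map_sum]
    simp only [map_smul, hbi, smul_eq_mul, mul_ite, mul_one, mul_zero]
    exact Finset.sum_ite_eq S n c
  by_cases hΛe : Λ = ∅
  · -- then A = ∅
    subst hΛe
    have hA0 : A = ∅ := by
      by_contra hne
      obtain ⟨n, hn⟩ := Finset.nonempty_iff_ne_empty.mpr hne
      have : (0:ℝ) < ∑ n ∈ A, w n := Finset.sum_pos (fun i _ => hw i) ⟨n, hn⟩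
      simp at hwA; linarith
    subst hA0
    simp only [Finset.sum_empty, sub_zero]
    nlinarith [norm_nonneg x]
  have hΛ : Λ.Nonempty := Finset.nonempty_iff_ne_empty.mpr hΛe
  set t : ℝ := Λ.inf' hΛ (fun k => |f k x|) with htdef
  have ht0 : 0 ≤ t := Finset.le_inf' hΛ _ (fun k _ => abs_nonneg _)
  have htle : ∀ k ∈ Λ, t ≤ |f k x| := fun k hk => Finset.inf'_le _ hk
  have hout : ∀ j, j ∉ Λ → |f j x| ≤ t :=
    fun j hj => Finset.le_inf' hΛ _ (fun k hk => hgr k hk j hj)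
  set y : X := ∑ n ∈ A, α n • e n with hydef
  set z : X := x - y with hzdef
  set v : X := x - ∑ n ∈ Λ ∪ A, f n x • e n with hvdef
  have hfv : ∀ n, f n v = if n ∈ Λ ∪ A then 0 else f n x := by
    intro n
    rw [hvdef, map_sub, fP]
    split <;> simp
  -- key identity: x - P_Λ x = v + ∑_{A\Λ}
  have hK1 : x - ∑ k ∈ Λ, f k x • e k = v + ∑ n ∈ A \ Λ, f n x • e n := by
    rw [hvdef, show Λ ∪ A = Λ ∪ (A \ Λ) from (Finset.union_sdiff_self_eq_union).symm,
      Finset.sum_union Finset.disjoint_sdiff]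
    abel
  -- suppression bound for subsets of Λ \ A
  have hsup : ∀ S ⊆ Λ \ A, ‖v + ∑ n ∈ S, f n x • e n‖ ≤ Ku * ‖z‖ := by
    intro S hS
    have hSU : S ⊆ Λ ∪ A := hS.trans ((Finset.sdiff_subset).trans Finset.subset_union_left)
    have hSA : Disjoint A S := by
      refine Finset.disjoint_left.mpr (fun n hnA hnS => ?_)
      exact (Finset.mem_sdiff.mp (hS hnS)).2 hnA
    have hid : v + ∑ n ∈ S, f n x • e n = z - ∑ n ∈ (Λ ∪ A) \ S, f n z • e n := by
      have h1 : ∑ n ∈ (Λ ∪ A) \ S, f n y • e n = y := by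
        have hcalc : ∀ n ∈ (Λ ∪ A) \ S, f n y • e n
            = if n ∈ A then α n • e n else 0 := by
          intro n _
          rw [hydef, fP]
          split <;> simp
        rw [Finset.sum_congr rfl hcalc, Finset.sum_ite_mem,
          Finset.inter_eq_right.mpr (Finset.subset_sdiff.mpr ⟨Finset.subset_union_right, hSA⟩)]
      have h2 : ∑ n ∈ (Λ ∪ A) \ S, f n z • e n
          = ∑ n ∈ (Λ ∪ A) \ S, f n x • e n - y := by
        rw [← h1, ← Finset.sum_sub_distrib]
        apply Finset.sum_congr rfl
        intro n _
        rw [hzdef, map_sub, sub_smul]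
      rw [h2, hzdef]
      have h3 : ∑ n ∈ Λ ∪ A, f n x • e n
          = ∑ n ∈ (Λ ∪ A) \ S, f n x • e n + ∑ n ∈ S, f n x • e n := by
        rw [Finset.sum_sdiff hSU]
      rw [hvdef, h3]
      abel
    rw [hid]
    exact hunc z _
  -- degenerate case t = 0
  by_cases ht0' : t = 0
  · have hzero : ∀ i, f i (x - ∑ k ∈ Λ, f k x • e k) = 0 := by
      intro i
      rw [map_sub, fP]
      by_cases hi : i ∈ Λ
      · simp [hi]
      · have : |f i x| ≤ 0 := ht0' ▸ hout i hi
        have : f i x = 0 := abs_nonpos_iff.mp this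
        simp [hi, this]
    have hlim := hexp (x - ∑ k ∈ Λ, f k x • e k)
    simp only [hzero, zero_smul, Finset.sum_const_zero] at hlim
    have : x - ∑ k ∈ Λ, f k x • e k = 0 :=
      (tendsto_nhds_unique tendsto_const_nhds hlim).symm
    rw [this, norm_zero]
    have : (0:ℝ) ≤ ‖x - ∑ n ∈ A, α n • e n‖ := norm_nonneg _
    nlinarith
  have htpos : 0 < t := lt_of_le_of_ne ht0 (Ne.symm ht0')
  -- sign function for Λ \ A side
  set η : ℕ → ℝ := fun n => if f n x < 0 then (-1:ℝ) else 1 with hηdef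
  have hη : ∀ n, η n = 1 ∨ η n = -1 := by
    intro n; rw [hηdef]; dsimp only; split
    · exact Or.inr rfl
    · exact Or.inl rfl
  -- step c: ‖v + ∑_{Λ\A} (t η)‖ ≤ Ku ‖z‖
  have hstepc : ‖v + ∑ n ∈ Λ \ A, (t * (if f n x < 0 then (-1:ℝ) else 1)) • e n‖ ≤ Ku * ‖z‖ := by
    apply aux_down e t (Ku * ‖z‖) ht0 (fun n => f n x) (Λ \ A)
      (fun n hn => htle n (Finset.mem_sdiff.mp hn).1) v hsup
  -- weights
  have hw' : ∑ n ∈ A \ Λ, w n ≤ ∑ n ∈ Λ \ A, w n := by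
    have e1 : ∑ n ∈ A ∩ Λ, w n + ∑ n ∈ A \ Λ, w n = ∑ n ∈ A, w n :=
      Finset.sum_inter_add_sum_sdiff A Λ w
    have e2 : ∑ n ∈ Λ ∩ A, w n + ∑ n ∈ Λ \ A, w n = ∑ n ∈ Λ, w n :=
      Finset.sum_inter_add_sum_sdiff Λ A w
    rw [Finset.inter_comm] at e1
    linarith
  -- step b via property A, for each sign choice
  have hstepb : ∀ ε : ℕ → ℝ, (∀ n, ε n = 1 ∨ ε n = -1) →
      ‖v + ∑ n ∈ A \ Λ, (t * ε n) • e n‖ ≤ Ca * (Ku * ‖z‖) := by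
    intro ε hε
    have hdisj : Disjoint (A \ Λ) (Λ \ A) := by
      refine Finset.disjoint_left.mpr (fun n hn hn' => ?_)
      exact (Finset.mem_sdiff.mp hn).2 (Finset.mem_sdiff.mp hn').1
    have hzero : ∀ n ∈ (A \ Λ) ∪ (Λ \ A), f n v = 0 := by
      intro n hn
      rw [hfv]
      have : n ∈ Λ ∪ A := by
        rcases Finset.mem_union.mp hn with h' | h'
        · exact Finset.mem_union_right _ (Finset.mem_sdiff.mp h').1
        · exact Finset.mem_union_left _ (Finset.mem_sdiff.mp h').1
      simp [this]
    have hbd : ∀ j, |f j v| ≤ t := by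
      intro j
      rw [hfv]
      by_cases hj : j ∈ Λ ∪ A
      · simp [hj, ht0]
      · rw [if_neg hj]
        exact hout j (fun hc => hj (Finset.mem_union_left _ hc))
    have := hA v (A \ Λ) (Λ \ A) ε η t hε hη hw' hdisj hzero hbd
    refine this.trans ?_
    exact mul_le_mul_of_nonneg_left hstepc (by linarith)
  -- step a: convexity
  have hstepa : ‖v + ∑ n ∈ A \ Λ, f n x • e n‖ ≤ Ca * (Ku * ‖z‖) := by
    apply aux_up e t (Ca * (Ku * ‖z‖)) htpos (fun n => f n x) (A \ Λ)
      (fun n hn => hout n (Finset.mem_sdiff.mp hn).2) v hstepb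
  rw [hK1]
  calc ‖v + ∑ n ∈ A \ Λ, f n x • e n‖ ≤ Ca * (Ku * ‖z‖) := hstepa
    _ = (Ku * Ca) * ‖x - ∑ n ∈ A, α n • e n‖ := by rw [hzdef, hydef]; ring
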